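/- Let B_{χ,μ} be the completion of the Boolean algebra freely generated by {x_{α,ε} : α < χ, ε < μ} subject only to the relations x_{α,ε} ∧ x_{α,ζ} = 0 for ε < ζ < μ. Then B_{χ,μ} satisfies the μ⁺-chain condition. -/

import Mathlib

universe u

open Cardinal Set

namespace FreeCCAux

variable {μ : Cardinal.{u}}

lemma mul_le_self' {a b : Cardinal.{u}} (hμ : ℵ₀ ≤ μ) (ha : a ≤ μ) (hb : b ≤ μ) :
    a * b ≤ μ :=
  (mul_le_mul' ha hb).trans_eq (Cardinal.mul_eq_self hμ)

lemma pigeonhole {ι β : Type u} (hμ : ℵ₀ ≤ μ) (hβ : #β ≤ μ) (f : ι → β)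
    (hι : μ < #ι) : ∃ b : β, μ < #(f ⁻¹' {b}) := by
  by_contra h
  push_neg at h
  have huniv : (Set.univ : Set ι) = ⋃ b : β, f ⁻¹' {b} := by ext i; simp
  have h2 : #ι ≤ #β * ⨆ b : β, #(f ⁻¹' {b}) := by
    rw [← Cardinal.mk_univ, huniv]; exact Cardinal.mk_iUnion_le _
  exact absurd (h2.trans (mul_le_self' hμ hβ (ciSup_le' h))) hι.not_ge

/-- Δ-system lemma for families of finite sets of size `≤ n`. -/
lemma delta_of_card_le {α : Type u} [DecidableEq α] (hμ : ℵ₀ ≤ μ) (n : ℕ) :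
    ∀ {ι : Type u} (A : ι → Finset α), (∀ i, (A i).card ≤ n) → μ < #ι →
    ∃ (r : Finset α) (S : Set ι), μ < #S ∧
      ∀ i ∈ S, ∀ j ∈ S, i ≠ j → A i ∩ A j = r := by
  classical
  induction n with
  | zero =>
    intro ι A hcard hι
    refine ⟨∅, Set.univ, by rwa [Cardinal.mk_univ], ?_⟩
    intro i _ j _ _
    have h1 : A i = ∅ := Finset.card_eq_zero.mp (Nat.le_zero.mp (hcard i))
    rw [h1, Finset.empty_inter]
  | succ n ih =>
    intro ι A hcard hι
    by_cases hx : ∃ x : α, μ < #{i : ι | x ∈ A i}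
    · obtain ⟨x, hx⟩ := hx
      obtain ⟨r, S, hS, hroot⟩ := ih (ι := {i : ι | x ∈ A i})
        (fun i => (A i.1).erase x)
        (fun i => by
          have h1 := hcard i.1
          rw [Finset.card_erase_of_mem i.2]; omega) hx
      refine ⟨insert x r, Subtype.val '' S, ?_, ?_⟩
      · rwa [Cardinal.mk_image_eq Subtype.val_injective]
      · rintro _ ⟨i, hi, rfl⟩ _ ⟨j, hj, rfl⟩ hne
        have hij : i ≠ j := fun h => hne (by rw [h])
        have hr := hroot i hi j hj hij
        ext a
        simp only [Finset.mem_inter, Finset.mem_insert]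
        constructor
        · rintro ⟨hai, haj⟩
          by_cases hax : a = x
          · exact Or.inl hax
          · right
            have : a ∈ (A i.1).erase x ∩ (A j.1).erase x :=
              Finset.mem_inter.mpr ⟨Finset.mem_erase.mpr ⟨hax, hai⟩,
                Finset.mem_erase.mpr ⟨hax, haj⟩⟩
            rwa [hr] at this
        · rintro (rfl | har)
          · exact ⟨i.2, j.2⟩
          · have : a ∈ (A i.1).erase x ∩ (A j.1).erase x := hr ▸ har
            simp only [Finset.mem_inter, Finset.mem_erase] at this
            exact ⟨this.1.2, this.2.2⟩
    · push_neg at hx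
      have hzorn : ∃ S : Set ι,
          Maximal (fun S : Set ι => ∀ i ∈ S, ∀ j ∈ S, i ≠ j → A i ∩ A j = ∅) S := by
        apply zorn_subset
        intro c hc hchain
        refine ⟨⋃₀ c, ?_, fun s hs => subset_sUnion_of_mem hs⟩
        rintro i hi j hj hne
        obtain ⟨si, hsi, hisi⟩ := hi
        obtain ⟨sj, hsj, hjsj⟩ := hj
        rcases hchain.total hsi hsj with h | h
        · exact hc hsj i (h hisi) j hjsj hne
        · exact hc hsi i hisi j (h hjsj) hne
      obtain ⟨S, hSmax⟩ := hzorn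
      refine ⟨∅, S, ?_, fun i hi j hj hne => hSmax.1 i hi j hj hne⟩
      by_contra hS
      push_neg at hS
      set Bl : Set ι := S ∪ ⋃ i ∈ S, ⋃ a ∈ (↑(A i) : Set α), {j : ι | a ∈ A j}
        with hBldef
      have hBlcard : #Bl ≤ μ := by
        refine (Cardinal.mk_union_le _ _).trans (Cardinal.add_le_of_le hμ hS ?_)
        refine (Cardinal.mk_biUnion_le _ _).trans (mul_le_self' hμ hS (ciSup_le' ?_))
        intro i
        refine (Cardinal.mk_biUnion_le _ _).trans (mul_le_self' hμ ?_ (ciSup_le' ?_))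
        · exact ((A i.1).finite_toSet.lt_aleph0).le.trans hμ
        · intro a; exact hx a.1
      have hj : ∃ j : ι, j ∉ Bl := by
        by_contra hall
        push_neg at hall
        have : #ι ≤ #Bl := by
          rw [← Cardinal.mk_univ]
          exact Cardinal.mk_le_mk_of_subset fun i _ => hall i
        exact absurd (this.trans hBlcard) hι.not_ge
      obtain ⟨j, hj⟩ := hj
      have hjS : j ∉ S := fun h => hj (Or.inl h)
      have hP : ∀ i₁ ∈ insert j S, ∀ i₂ ∈ insert j S, i₁ ≠ i₂ → A i₁ ∩ A i₂ = ∅ := by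
        have key : ∀ i ∈ S, A j ∩ A i = ∅ := by
          intro i hi
          rw [Finset.eq_empty_iff_forall_notMem]
          intro a ha
          rw [Finset.mem_inter] at ha
          exact hj (Or.inr (Set.mem_biUnion hi (Set.mem_biUnion
            (Finset.mem_coe.mpr ha.2) ha.1)))
        rintro i₁ hi₁ i₂ hi₂ hne
        rcases Set.mem_insert_iff.mp hi₁ with h₁ | h₁ <;>
          rcases Set.mem_insert_iff.mp hi₂ with h₂ | h₂
        · exact absurd (h₁.trans h₂.symm) hne
        · rw [h₁]; exact key i₂ h₂
        · rw [h₂, Finset.inter_comm]; exact key i₁ h₁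
        · exact hSmax.1 i₁ h₁ i₂ h₂ hne
      have := hSmax.2 hP (Set.subset_insert j S)
      exact hjS (this (Set.mem_insert j S))

/-- Δ-system lemma, general form. -/
lemma delta_system {α ι : Type u} [DecidableEq α] (hμ : ℵ₀ ≤ μ) (A : ι → Finset α) (hι : μ < #ι) :
    ∃ (r : Finset α) (S : Set ι), μ < #S ∧
      ∀ i ∈ S, ∀ j ∈ S, i ≠ j → A i ∩ A j = r := by
  obtain ⟨b, hb⟩ := pigeonhole hμ (Cardinal.mk_le_aleph0.trans hμ)
    (fun i => (ULift.up (A i).card : ULift.{u} ℕ)) hι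
  obtain ⟨r, S, hS, hroot⟩ := delta_of_card_le hμ b.down
    (ι := ↥((fun i => (ULift.up (A i).card : ULift.{u} ℕ)) ⁻¹' {b}))
    (fun i => A i.1)
    (fun i => le_of_eq (congrArg ULift.down i.2))
    hb
  refine ⟨r, Subtype.val '' S, ?_, ?_⟩
  · rwa [Cardinal.mk_image_eq Subtype.val_injective]
  · rintro _ ⟨i, hi, rfl⟩ _ ⟨j, hj, rfl⟩ hne
    exact hroot i hi j hj (fun h => hne (by rw [h]))

end FreeCCAux

/-- **`B_{χ,μ}` has the `μ⁺`-chain condition.**  Here `B_{χ,μ}`, the completion of the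
Boolean algebra generated freely by `{x_{α,ε} : α < χ, ε < μ}` except for the relations
`x_{α,ε} ⊓ x_{α,ζ} = 0` (`ε ≠ ζ`), is characterized as a complete Boolean algebra `B`
with elements `x α ε` such that: the rows are pairwise disjoint (`hdisj`); every finite
conjunction of literals consistent with these relations is nonzero (freeness, `hfree`);
and the finite conjunctions of literals are dense in `B` (being a completion, `hdense`).
Then every family of pairwise disjoint nonzero elements of `B` has cardinality at
most `μ`. -/
theorem free_completion_chain_condition {B : Type u} [CompleteBooleanAlgebra B]
    (χ μ : Cardinal.{u}) (hμ : Cardinal.aleph0 ≤ μ)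
    (x : χ.out → μ.out → B)
    (hdisj : ∀ (α : χ.out) (ε ζ : μ.out), ε ≠ ζ → x α ε ⊓ x α ζ = ⊥)
    (hfree : ∀ s t : Finset (χ.out × μ.out),
      (∀ p ∈ s, ∀ q ∈ s, (p : χ.out × μ.out).1 = (q : χ.out × μ.out).1 → p = q) →
      (∀ p ∈ s, p ∉ t) →
      (s.inf fun p => x p.1 p.2) ⊓ (t.inf fun q => (x q.1 q.2)ᶜ) ≠ ⊥)
    (hdense : ∀ b : B, b ≠ ⊥ → ∃ s t : Finset (χ.out × μ.out),
      (s.inf fun p => x p.1 p.2) ⊓ (t.inf fun q => (x q.1 q.2)ᶜ) ≠ ⊥ ∧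
      (s.inf fun p => x p.1 p.2) ⊓ (t.inf fun q => (x q.1 q.2)ᶜ) ≤ b)
    (T : Set B) (hT0 : ∀ a ∈ T, a ≠ ⊥)
    (hTd : T.Pairwise fun a b => a ⊓ b = ⊥) :
    Cardinal.mk T ≤ μ := by
  classical
  by_contra hcon
  push_neg at hcon
  choose s t hne hle using fun i : ↥T => hdense i (hT0 i i.2)
  -- basic facts about the chosen cells
  have fact_fun : ∀ (i : ↥T), ∀ p ∈ s i, ∀ q ∈ s i,
      (p : χ.out × μ.out).1 = (q : χ.out × μ.out).1 → p = q := by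
    intro i p hp q hq h1
    by_contra hne'
    have h2 : p.2 ≠ q.2 := fun h => hne' (Prod.ext h1 h)
    have hb : x p.1 p.2 ⊓ x q.1 q.2 = ⊥ := by
      rw [h1]; exact hdisj q.1 p.2 q.2 h2
    apply hne i
    have l1 : ((s i).inf fun p => x p.1 p.2) ≤ x p.1 p.2 := Finset.inf_le hp
    have l2 : ((s i).inf fun p => x p.1 p.2) ≤ x q.1 q.2 := Finset.inf_le hq
    have : ((s i).inf fun p => x p.1 p.2) ⊓ ((t i).inf fun q => (x q.1 q.2)ᶜ)
        ≤ x p.1 p.2 ⊓ x q.1 q.2 :=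
      le_trans inf_le_left (le_inf l1 l2)
    rw [hb] at this
    exact le_bot_iff.mp this
  have fact_st : ∀ (i : ↥T), ∀ p ∈ s i, p ∉ t i := by
    intro i p hp hpt
    apply hne i
    have l1 : ((s i).inf fun p => x p.1 p.2) ≤ x p.1 p.2 := Finset.inf_le hp
    have l2 : ((t i).inf fun q => (x q.1 q.2)ᶜ) ≤ (x p.1 p.2)ᶜ := Finset.inf_le hpt
    have : ((s i).inf fun p => x p.1 p.2) ⊓ ((t i).inf fun q => (x q.1 q.2)ᶜ)
        ≤ x p.1 p.2 ⊓ (x p.1 p.2)ᶜ := inf_le_inf l1 l2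
    rw [inf_compl_eq_bot] at this
    exact le_bot_iff.mp this
  -- Δ-system on the sets of first coordinates
  set d : ↥T → Finset χ.out := fun i => (s i ∪ t i).image Prod.fst with hd_def
  obtain ⟨r, S, hS, hroot⟩ := FreeCCAux.delta_system hμ d hcon
  -- trace map into finsets over the root
  set Qp : χ.out × μ.out → Prop := fun p => p.1 ∈ r with hQp_def
  have hQ : #(Subtype Qp) ≤ μ := by
    have hinj : Function.Injective (fun p : Subtype Qp =>
        ((⟨p.1.1, p.2⟩ : {a : χ.out // a ∈ r}), p.1.2)) := by
      intro a b h
      rw [Prod.mk.injEq, Subtype.mk.injEq] at h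
      exact Subtype.ext (Prod.ext h.1 h.2)
    calc #(Subtype Qp) ≤ #({a : χ.out // a ∈ r} × μ.out) :=
          Cardinal.mk_le_of_injective hinj
      _ = #{a : χ.out // a ∈ r} * #(μ.out) := by
          rw [Cardinal.mk_prod, Cardinal.lift_id, Cardinal.lift_id]
      _ ≤ μ * μ := by
          refine mul_le_mul' ?_ (le_of_eq (Cardinal.mk_out μ))
          exact le_trans (Cardinal.lt_aleph0_of_finite _).le hμ
      _ = μ := Cardinal.mul_eq_self hμ
  have hFQ : #(Finset (Subtype Qp)) ≤ μ := by
    rcases finite_or_infinite (Subtype Qp) with h | h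
    · haveI := Fintype.ofFinite (Subtype Qp)
      exact le_trans (Cardinal.lt_aleph0_of_finite _).le hμ
    · rw [Cardinal.mk_finset_of_infinite]; exact hQ
  have hFF : #(Finset (Subtype Qp) × Finset (Subtype Qp)) ≤ μ := by
    rw [Cardinal.mk_prod, Cardinal.lift_id]
    exact FreeCCAux.mul_le_self' hμ hFQ hFQ
  set g : ↥S → Finset (Subtype Qp) × Finset (Subtype Qp) :=
    fun i => ((s i.1).subtype Qp, (t i.1).subtype Qp) with hg_def
  have hginj : ¬ Function.Injective g := fun hg =>
    absurd ((Cardinal.mk_le_of_injective hg).trans hFF) hS.not_ge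
  rw [Function.not_injective_iff] at hginj
  obtain ⟨i, j, hgij, hij⟩ := hginj
  set ii : ↥T := i.1
  set jj : ↥T := j.1
  have hij' : ii ≠ jj := fun h => hij (Subtype.ext h)
  have hd : d ii ∩ d jj = r := hroot ii i.2 jj j.2 hij'
  have hsfilter : (s ii).filter Qp = (s jj).filter Qp := by
    have h1 := congrArg (fun u : Finset (Subtype Qp) =>
      u.map (Function.Embedding.subtype Qp)) (congrArg Prod.fst hgij)
    simpa [hg_def, Finset.subtype_map] using h1
  have htfilter : (t ii).filter Qp = (t jj).filter Qp := by
    have h1 := congrArg (fun u : Finset (Subtype Qp) =>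
      u.map (Function.Embedding.subtype Qp)) (congrArg Prod.snd hgij)
    simpa [hg_def, Finset.subtype_map] using h1
  have mem_d : ∀ (k : ↥T) p, p ∈ s k ∪ t k → (p : χ.out × μ.out).1 ∈ d k :=
    fun k p hp => Finset.mem_image_of_mem _ hp
  have cross_s : ∀ p, p ∈ s ii → (p : χ.out × μ.out).1 ∈ d jj → p ∈ s jj := by
    intro p hp hpd
    have h1 : Qp p := by
      have : (p : χ.out × μ.out).1 ∈ d ii ∩ d jj :=
        Finset.mem_inter.mpr ⟨mem_d ii p (Finset.mem_union_left _ hp), hpd⟩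
      rw [hd] at this; exact this
    have h2 : p ∈ (s ii).filter Qp := Finset.mem_filter.mpr ⟨hp, h1⟩
    rw [hsfilter] at h2
    exact (Finset.mem_filter.mp h2).1
  have cross_s' : ∀ p, p ∈ s jj → (p : χ.out × μ.out).1 ∈ d ii → p ∈ s ii := by
    intro p hp hpd
    have h1 : Qp p := by
      have : (p : χ.out × μ.out).1 ∈ d ii ∩ d jj :=
        Finset.mem_inter.mpr ⟨hpd, mem_d jj p (Finset.mem_union_left _ hp)⟩
      rw [hd] at this; exact this
    have h2 : p ∈ (s jj).filter Qp := Finset.mem_filter.mpr ⟨hp, h1⟩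
    rw [← hsfilter] at h2
    exact (Finset.mem_filter.mp h2).1
  -- the two cells are compatible
  have hfun : ∀ p ∈ s ii ∪ s jj, ∀ q ∈ s ii ∪ s jj,
      (p : χ.out × μ.out).1 = (q : χ.out × μ.out).1 → p = q := by
    intro p hp q hq h1
    rcases Finset.mem_union.mp hp with hp | hp <;>
      rcases Finset.mem_union.mp hq with hq | hq
    · exact fact_fun ii p hp q hq h1
    · have hq' : q ∈ s ii :=
        cross_s' q hq (h1 ▸ mem_d ii p (Finset.mem_union_left _ hp))
      exact fact_fun ii p hp q hq' h1
    · have hp' : p ∈ s ii :=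
        cross_s' p hp (h1 ▸ mem_d ii q (Finset.mem_union_left _ hq))
      exact fact_fun ii p hp' q hq h1
    · exact fact_fun jj p hp q hq h1
  have hdisj' : ∀ p ∈ s ii ∪ s jj, p ∉ t ii ∪ t jj := by
    intro p hp hpt
    rcases Finset.mem_union.mp hp with hp | hp <;>
      rcases Finset.mem_union.mp hpt with hpt | hpt
    · exact fact_st ii p hp hpt
    · exact fact_st jj p
        (cross_s p hp (mem_d jj p (Finset.mem_union_right _ hpt))) hpt
    · exact fact_st ii p
        (cross_s' p hp (mem_d ii p (Finset.mem_union_right _ hpt))) hpt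
    · exact fact_st jj p hp hpt
  have hneq := hfree (s ii ∪ s jj) (t ii ∪ t jj) hfun hdisj'
  apply hneq
  have heq : ((s ii ∪ s jj).inf fun p => x p.1 p.2) ⊓
      ((t ii ∪ t jj).inf fun q => (x q.1 q.2)ᶜ) =
      (((s ii).inf fun p => x p.1 p.2) ⊓ ((t ii).inf fun q => (x q.1 q.2)ᶜ)) ⊓
      (((s jj).inf fun p => x p.1 p.2) ⊓ ((t jj).inf fun q => (x q.1 q.2)ᶜ)) := by
    rw [Finset.inf_union, Finset.inf_union]
    exact inf_inf_inf_comm _ _ _ _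
  rw [heq]
  have hbot : (ii : B) ⊓ (jj : B) = ⊥ :=
    hTd ii.2 jj.2 (fun h => hij' (Subtype.ext h))
  have hle2 : (((s ii).inf fun p => x p.1 p.2) ⊓ ((t ii).inf fun q => (x q.1 q.2)ᶜ)) ⊓
      (((s jj).inf fun p => x p.1 p.2) ⊓ ((t jj).inf fun q => (x q.1 q.2)ᶜ))
      ≤ (ii : B) ⊓ (jj : B) := inf_le_inf (hle ii) (hle jj)
  rw [hbot] at hle2
  exact le_bot_iff.mp hle2
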